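/- arXiv:2605.11506 — 4 statements merged into one kernel-verified Lean document; each statement's English description precedes it below -/
import Mathlib

section
/- (Start bound) Let Σ be a positive semidefinite n×n real matrix, σ > 0, and τ ∈ (0,1). Define Δ := Σ − Φ(Σ; σ) = Σ(Σ + σ²I)⁻¹Σ. If σ² ≥ ((1 − τ)/τ)·ν_max(Σ), where ν_max(Σ) is the largest eigenvalue of Σ, then Δ ⪯ τΣ. Conversely, if Δ ⪯ τΣ, then σ² ≥ ((1 − τ)/τ)·ν_max(Σ). -/
open Matrix

/-- Start bound: For PSD `S`, `σ > 0`, `τ ∈ (0,1)` and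
`Δ := S (S + σ²I)⁻¹ S`, we have `Δ ⪯ τS` iff `σ² ≥ ((1-τ)/τ)·ν_max(S)`,
where `ν_max(S)` is the largest eigenvalue of `S`. -/
theorem stmt_3 {n : ℕ} (hn : 0 < n) (S : Matrix (Fin n) (Fin n) ℝ) (hS : S.PosSemidef)
    (σ τ : ℝ) (hσ : 0 < σ) (hτ : τ ∈ Set.Ioo (0 : ℝ) 1) :
    (σ ^ 2 ≥ (1 - τ) / τ * (⨆ i, hS.1.eigenvalues i) →
      (τ • S - S * (S + (σ ^ 2) • (1 : Matrix (Fin n) (Fin n) ℝ))⁻¹ * S).PosSemidef) ∧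
    ((τ • S - S * (S + (σ ^ 2) • (1 : Matrix (Fin n) (Fin n) ℝ))⁻¹ * S).PosSemidef →
      σ ^ 2 ≥ (1 - τ) / τ * (⨆ i, hS.1.eigenvalues i)) := by
  obtain ⟨hτ0, hτ1⟩ := hτ
  have hσ2 : 0 < σ ^ 2 := by positivity
  set d : Fin n → ℝ := hS.1.eigenvalues with hd
  have hd0 : ∀ i, 0 ≤ d i := fun i => hS.eigenvalues_nonneg i
  set U : Matrix (Fin n) (Fin n) ℝ := (hS.1.eigenvectorUnitary : Matrix (Fin n) (Fin n) ℝ) with hU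
  have hUU : star U * U = 1 := (Matrix.mem_unitaryGroup_iff').mp hS.1.eigenvectorUnitary.2
  have hUU' : U * star U = 1 := (Matrix.mem_unitaryGroup_iff).mp hS.1.eigenvectorUnitary.2
  have hspec : S = U * diagonal d * star U := by
    have := hS.1.spectral_theorem
    simpa [RCLike.ofReal_real_eq_id] using this
  -- entries of D + σ² I are positive
  have hdpos : ∀ i, 0 < d i + σ ^ 2 := fun i => by linarith [hd0 i]
  have hsum : S + (σ ^ 2) • (1 : Matrix (Fin n) (Fin n) ℝ)
      = U * diagonal (fun i => d i + σ ^ 2) * star U := by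
    rw [hspec]
    have h1 : (σ ^ 2) • (1 : Matrix (Fin n) (Fin n) ℝ)
        = U * ((σ ^ 2) • (1 : Matrix (Fin n) (Fin n) ℝ)) * star U := by
      rw [Matrix.mul_smul, Matrix.smul_mul, mul_one, hUU']
    rw [h1, ← Matrix.add_mul, ← Matrix.mul_add]
    congr 1
    congr 1
    rw [Matrix.smul_one_eq_diagonal, diagonal_add]
  have hinv : (S + (σ ^ 2) • (1 : Matrix (Fin n) (Fin n) ℝ))⁻¹
      = U * diagonal (fun i => (d i + σ ^ 2)⁻¹) * star U := by
    apply Matrix.inv_eq_right_inv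
    rw [hsum]
    calc U * diagonal (fun i => d i + σ ^ 2) * star U *
          (U * diagonal (fun i => (d i + σ ^ 2)⁻¹) * star U)
        = U * (diagonal (fun i => d i + σ ^ 2) * (star U * U)
            * diagonal (fun i => (d i + σ ^ 2)⁻¹)) * star U := by
          simp only [Matrix.mul_assoc]
      _ = 1 := by
          rw [hUU, mul_one, diagonal_mul_diagonal]
          have : (fun i => (d i + σ ^ 2) * (d i + σ ^ 2)⁻¹) = fun _ => (1:ℝ) := by
            funext i; exact mul_inv_cancel₀ (hdpos i).ne'
          rw [this, diagonal_one, mul_one, hUU']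
  set g : Fin n → ℝ := fun i => τ * d i - d i * (d i + σ ^ 2)⁻¹ * d i with hg
  have hkey : τ • S - S * (S + (σ ^ 2) • (1 : Matrix (Fin n) (Fin n) ℝ))⁻¹ * S
      = U * diagonal g * star U := by
    rw [hinv]
    conv_lhs => rw [hspec]
    have conj_mul : ∀ A B : Matrix (Fin n) (Fin n) ℝ,
        (U * A * star U) * (U * B * star U) = U * (A * B) * star U := by
      intro A B
      simp only [Matrix.mul_assoc]
      rw [← Matrix.mul_assoc (star U) U, hUU, Matrix.one_mul]
    rw [conj_mul, conj_mul, ← smul_mul_assoc, ← mul_smul_comm, ← Matrix.sub_mul, ← Matrix.mul_sub]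
    congr 2
    rw [diagonal_mul_diagonal, diagonal_mul_diagonal, ← diagonal_smul, ← diagonal_sub]
    congr 1
  -- PSD of the expression iff all g i ≥ 0
  have hiff : (τ • S - S * (S + (σ ^ 2) • (1 : Matrix (Fin n) (Fin n) ℝ))⁻¹ * S).PosSemidef
      ↔ ∀ i, 0 ≤ g i := by
    rw [hkey]
    constructor
    · intro h
      rw [← posSemidef_diagonal_iff (d := g)]
      have h2 := h.conjTranspose_mul_mul_same U
      have : Uᴴ * (U * diagonal g * star U) * U = diagonal g := by
        have hstar : star U = Uᴴ := rfl
        rw [← hstar]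
        calc star U * (U * diagonal g * star U) * U
            = (star U * U) * diagonal g * (star U * U) := by simp only [Matrix.mul_assoc]
          _ = diagonal g := by rw [hUU]; simp
      rwa [this] at h2
    · intro h
      have hD : (diagonal g).PosSemidef := posSemidef_diagonal_iff.mpr h
      have := hD.mul_mul_conjTranspose_same U
      exact this
  -- scalar characterization
  have hgd : ∀ i, 0 ≤ g i ↔ σ ^ 2 ≥ (1 - τ) / τ * d i := by
    intro i
    simp only [hg]
    rcases eq_or_lt_of_le (hd0 i) with h0 | hpos
    · simp [hg, ← h0]
      positivity
    · have hds : 0 < d i + σ ^ 2 := hdpos i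
      have hrk : d i * (d i + σ ^ 2)⁻¹ * d i = d i * d i / (d i + σ ^ 2) := by
        field_simp
      rw [ge_iff_le, div_mul_eq_mul_div, div_le_iff₀ hτ0, sub_nonneg, hrk, div_le_iff₀ hds]
      constructor
      · intro h; nlinarith [h, hpos]
      · intro h; nlinarith [mul_le_mul_of_nonneg_right h hpos.le, hpos]
  have hne : Nonempty (Fin n) := ⟨⟨0, hn⟩⟩
  constructor
  · intro hb
    rw [hiff]
    intro i
    rw [hgd i]
    refine le_trans ?_ hb
    apply mul_le_mul_of_nonneg_left (le_ciSup (f := d) (Set.Finite.bddAbove (Set.finite_range d)) i)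
    exact div_nonneg (by linarith) hτ0.le
  · intro hb
    rw [hiff] at hb
    have h1τ : (0:ℝ) < 1 - τ := by linarith
    have hs : (⨆ i, d i) ≤ σ ^ 2 * τ / (1 - τ) := by
      apply ciSup_le
      intro i
      have hi := (hgd i).mp (hb i)
      rw [ge_iff_le, div_mul_eq_mul_div, div_le_iff₀ hτ0] at hi
      rw [le_div_iff₀ h1τ]
      nlinarith
    have h2 := (le_div_iff₀ h1τ).mp hs
    rw [ge_iff_le, div_mul_eq_mul_div, div_le_iff₀ hτ0]
    nlinarith
end

section
/- (Stop bound, matrix form for diagonal covariance) Let Σ_s = diag(ν₁,…,ν_n) with all ν_i ≥ 0, let σ_s > 0, τ ∈ (0,1), σ_t ≥ 0, and define Σ₀ := Φ(Σ_s; σ_s) and Δ := Φ(Σ_s; √(σ_s² + σ_t²)) − Σ₀, where Φ(Σ; σ) := Σ − Σ(Σ + σ²I)⁻¹Σ. Suppose ν_max := max_i ν_i > τσ_s². If σ_t² ≤ τσ_s²(ν_max + σ_s²)/(ν_max − τσ_s²), then Δ ⪯ τΣ₀. -/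
open Matrix

lemma ring_inv_pi {n : ℕ} (f : Fin n → ℝ) (hf : ∀ i, f i ≠ 0) :
    Ring.inverse f = fun i => (f i)⁻¹ := by
  have hu : Ring.inverse ((⟨f, fun i => (f i)⁻¹,
      funext fun i => mul_inv_cancel₀ (hf i),
      funext fun i => inv_mul_cancel₀ (hf i)⟩ : (Fin n → ℝ)ˣ) : Fin n → ℝ)
      = (((⟨f, fun i => (f i)⁻¹,
      funext fun i => mul_inv_cancel₀ (hf i),
      funext fun i => inv_mul_cancel₀ (hf i)⟩ : (Fin n → ℝ)ˣ))⁻¹ : (Fin n → ℝ)ˣ) :=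
    Ring.inverse_unit _
  simpa using hu

lemma phi_diag {n : ℕ} (ν : Fin n → ℝ) (c : ℝ) (hc : ∀ i, ν i + c ≠ 0) :
    Matrix.diagonal ν - Matrix.diagonal ν * (Matrix.diagonal ν + c • (1 : Matrix (Fin n) (Fin n) ℝ))⁻¹ * Matrix.diagonal ν
    = Matrix.diagonal (fun i => ν i - ν i * (ν i + c)⁻¹ * ν i) := by
  have h1 : Matrix.diagonal ν + c • (1 : Matrix (Fin n) (Fin n) ℝ) = Matrix.diagonal (fun i => ν i + c) := by
    ext i j
    by_cases h : i = j <;> simp [Matrix.diagonal_apply, Matrix.one_apply, h]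
  rw [h1, Matrix.inv_diagonal, ring_inv_pi _ hc, Matrix.diagonal_mul_diagonal,
    Matrix.diagonal_mul_diagonal, ← Matrix.diagonal_sub]


/-- Stop bound, matrix form for diagonal covariance: with
`Φ(S; s) := S − S(S + s²I)⁻¹S`, `Ss = diag ν` (all `νᵢ ≥ 0`), `σs > 0`, `τ ∈ (0,1)`,
`σt ≥ 0`, `Σ₀ := Φ(Ss; σs)`, `Δ := Φ(Ss; √(σs²+σt²)) − Σ₀`: if `ν_max > τσs²` and
`σt² ≤ τσs²(ν_max+σs²)/(ν_max − τσs²)`, then `Δ ⪯ τΣ₀`. -/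
theorem stmt_8 {n : ℕ} (hn : 0 < n) (ν : Fin n → ℝ) (hν : ∀ i, 0 ≤ ν i)
    (σs τ σt : ℝ) (hσs : 0 < σs) (hτ : τ ∈ Set.Ioo (0 : ℝ) 1) (hσt : 0 ≤ σt)
    (Φ : Matrix (Fin n) (Fin n) ℝ → ℝ → Matrix (Fin n) (Fin n) ℝ)
    (hΦ : ∀ S s, Φ S s = S - S * (S + (s ^ 2) • (1 : Matrix (Fin n) (Fin n) ℝ))⁻¹ * S)
    (νmax : ℝ) (hνmax : νmax = Finset.univ.sup' (Finset.univ_nonempty_iff.mpr ⟨⟨0, hn⟩⟩) ν)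
    (hgt : νmax > τ * σs ^ 2)
    (hbound : σt ^ 2 ≤ τ * σs ^ 2 * (νmax + σs ^ 2) / (νmax - τ * σs ^ 2)) :
    (τ • Φ (Matrix.diagonal ν) σs -
      (Φ (Matrix.diagonal ν) (Real.sqrt (σs ^ 2 + σt ^ 2)) -
        Φ (Matrix.diagonal ν) σs)).PosSemidef := by
  obtain ⟨hτ0, hτ1⟩ := hτ
  set a := σs ^ 2 with ha
  set t := σt ^ 2 with ht
  have ha0 : 0 < a := by positivity
  have ht0 : 0 ≤ t := by positivity
  have hsq : Real.sqrt (a + t) ^ 2 = a + t := Real.sq_sqrt (by positivity)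
  have hc1 : ∀ i, ν i + a ≠ 0 := fun i => by have := hν i; positivity
  have hc2 : ∀ i, ν i + (a + t) ≠ 0 := fun i => by have := hν i; positivity
  have e1 : Φ (Matrix.diagonal ν) σs
      = Matrix.diagonal (fun i => ν i - ν i * (ν i + a)⁻¹ * ν i) := by
    rw [hΦ]; exact phi_diag ν a hc1
  have e2 : Φ (Matrix.diagonal ν) (Real.sqrt (a + t))
      = Matrix.diagonal (fun i => ν i - ν i * (ν i + (a + t))⁻¹ * ν i) := by
    rw [hΦ, hsq]; exact phi_diag ν (a + t) hc2
  rw [e1, e2]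
  have ediag : τ • Matrix.diagonal (fun i => ν i - ν i * (ν i + a)⁻¹ * ν i) -
      (Matrix.diagonal (fun i => ν i - ν i * (ν i + (a + t))⁻¹ * ν i) -
        Matrix.diagonal (fun i => ν i - ν i * (ν i + a)⁻¹ * ν i))
      = Matrix.diagonal (fun i => τ * (ν i - ν i * (ν i + a)⁻¹ * ν i) -
        ((ν i - ν i * (ν i + (a + t))⁻¹ * ν i) - (ν i - ν i * (ν i + a)⁻¹ * ν i))) := by
    ext i j
    by_cases h : i = j <;> simp [Matrix.diagonal_apply, h]
  rw [ediag, Matrix.posSemidef_diagonal_iff]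
  intro i
  set x := ν i with hx
  have hx0 : 0 ≤ x := hν i
  have hxm : x ≤ νmax := hνmax ▸ Finset.le_sup' ν (Finset.mem_univ i)
  -- key scalar inequality
  have hkey : t * (νmax - τ * a) ≤ τ * a * (νmax + a) := by
    have hd : (0:ℝ) < νmax - τ * a := by linarith
    rw [le_div_iff₀ hd] at hbound
    linarith
  have hh : 0 ≤ τ * a * (x + a) - t * (x - τ * a) := by
    rcases le_or_gt t (τ * a) with h | h
    · nlinarith
    · nlinarith
  have h1 : (0:ℝ) < x + a := by linarith
  have h2 : (0:ℝ) < x + (a + t) := by linarith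
  have heq : τ • (x - x * (x + a)⁻¹ * x) -
      ((x - x * (x + (a + t))⁻¹ * x) - (x - x * (x + a)⁻¹ * x))
      = x * (τ * a * (x + a) - t * (x - τ * a)) / ((x + a) * (x + (a + t))) := by
    rw [smul_eq_mul]
    field_simp
    ring
  rw [show τ * (x - x * (x + a)⁻¹ * x) -
      ((x - x * (x + (a + t))⁻¹ * x) - (x - x * (x + a)⁻¹ * x))
      = τ • (x - x * (x + a)⁻¹ * x) -
      ((x - x * (x + (a + t))⁻¹ * x) - (x - x * (x + a)⁻¹ * x)) from by rw [smul_eq_mul], heq]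
  exact div_nonneg (mul_nonneg hx0 hh) (by positivity)
end

section
/- (Common descent, obtuse case) Let u, v ∈ ℝⁿ be nonzero, set r := ‖u‖/‖v‖ and cos θ := ⟨u, v⟩/(‖u‖‖v‖), and assume cos θ < 0 (with cos θ > −1 not required). Let λ > 0 and d := u + λv. Then ⟨u, d⟩ > 0 and ⟨v, d⟩ > 0 if and only if λ ∈ ( r·(−cos θ), r·(−1/cos θ) ). -/
/-- Common descent, obtuse case: for nonzero `u, v` with
`r = ‖u‖/‖v‖`, `cos θ = ⟨u,v⟩/(‖u‖‖v‖) < 0` and `λ > 0`, `d := u + λv` satisfies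
`⟨u,d⟩ > 0 ∧ ⟨v,d⟩ > 0` iff `λ ∈ (r·(−cos θ), r·(−1/cos θ))`. -/
theorem stmt_13 {n : ℕ} (u v : EuclideanSpace ℝ (Fin n)) (hu : u ≠ 0) (hv : v ≠ 0)
    (r c : ℝ) (hr : r = ‖u‖ / ‖v‖) (hc : c = (inner ℝ u v : ℝ) / (‖u‖ * ‖v‖))
    (hcneg : c < 0) (lam : ℝ) (hlam : 0 < lam) :
    (0 < (inner ℝ u (u + lam • v) : ℝ) ∧ 0 < (inner ℝ v (u + lam • v) : ℝ))
      ↔ lam ∈ Set.Ioo (r * (-c)) (r * (-1 / c)) := by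
  have hnu : (0:ℝ) < ‖u‖ := norm_pos_iff.mpr hu
  have hnv : (0:ℝ) < ‖v‖ := norm_pos_iff.mpr hv
  have huv : (inner ℝ u v : ℝ) = c * (‖u‖ * ‖v‖) := by
    rw [hc]; field_simp
  have e1 : (inner ℝ u (u + lam • v) : ℝ) = ‖u‖^2 + lam * (c * (‖u‖ * ‖v‖)) := by
    rw [inner_add_right, real_inner_smul_right, huv, real_inner_self_eq_norm_sq]
  have huv' : (inner ℝ v u : ℝ) = c * (‖u‖ * ‖v‖) := by rw [real_inner_comm]; exact huv
  have e2 : (inner ℝ v (u + lam • v) : ℝ) = c * (‖u‖ * ‖v‖) + lam * ‖v‖^2 := by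
    rw [inner_add_right, real_inner_smul_right, huv', real_inner_self_eq_norm_sq]
  rw [e1, e2, hr, Set.mem_Ioo]
  constructor
  · rintro ⟨h1, h2⟩
    constructor
    · rw [div_mul_eq_mul_div, div_lt_iff₀ hnv]
      nlinarith
    · rw [div_mul_div_comm, lt_div_iff_of_neg (by nlinarith : ‖v‖ * c < 0)]
      nlinarith
  · rintro ⟨h1, h2⟩
    rw [div_mul_eq_mul_div, div_lt_iff₀ hnv] at h1
    rw [div_mul_div_comm, lt_div_iff_of_neg (by nlinarith : ‖v‖ * c < 0)] at h2
    constructor <;> nlinarith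
end

section
/- (Common descent under two-sided normalization) Let u, v ∈ ℝⁿ be nonzero, cos θ := ⟨u,v⟩/(‖u‖‖v‖), r := ‖u‖/‖v‖, and λ := λ̂·r for some λ̂ > 0. Assume cos θ < 0. Then d := u + λv satisfies ⟨u,d⟩ > 0 and ⟨v,d⟩ > 0 if and only if λ̂ ∈ (−cos θ, −1/cos θ). -/
/-- Common descent under two-sided normalization: for nonzero `u, v`
with `cos θ = ⟨u,v⟩/(‖u‖‖v‖) < 0`, `r = ‖u‖/‖v‖` and `λ = λ̂·r` for `λ̂ > 0`,
`d := u + λv` satisfies `⟨u,d⟩ > 0 ∧ ⟨v,d⟩ > 0` iff `λ̂ ∈ (−cos θ, −1/cos θ)`. -/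
theorem stmt_14 {n : ℕ} (u v : EuclideanSpace ℝ (Fin n)) (hu : u ≠ 0) (hv : v ≠ 0)
    (r c : ℝ) (hr : r = ‖u‖ / ‖v‖) (hc : c = (inner ℝ u v : ℝ) / (‖u‖ * ‖v‖))
    (hcneg : c < 0) (lamhat lam : ℝ) (hlamhat : 0 < lamhat) (hlam : lam = lamhat * r) :
    (0 < (inner ℝ u (u + lam • v) : ℝ) ∧ 0 < (inner ℝ v (u + lam • v) : ℝ))
      ↔ lamhat ∈ Set.Ioo (-c) (-1 / c) := by
  have ha : (0:ℝ) < ‖u‖ := norm_pos_iff.mpr hu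
  have hb : (0:ℝ) < ‖v‖ := norm_pos_iff.mpr hv
  have huv : (inner ℝ u v : ℝ) = c * (‖u‖ * ‖v‖) := by
    rw [hc]; field_simp
  have e1 : (inner ℝ u (u + lam • v) : ℝ) = ‖u‖ * ‖u‖ * (1 + lamhat * c) := by
    rw [inner_add_right, real_inner_smul_right, real_inner_self_eq_norm_mul_norm, huv,
      hlam, hr]
    field_simp
  have e2 : (inner ℝ v (u + lam • v) : ℝ) = ‖u‖ * ‖v‖ * (lamhat + c) := by
    rw [inner_add_right, real_inner_smul_right, real_inner_self_eq_norm_mul_norm,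
      real_inner_comm, huv, hlam, hr]
    field_simp
    ring
  rw [e1, e2]
  have hsq : (0:ℝ) < ‖u‖ * ‖u‖ := mul_pos ha ha
  have hab : (0:ℝ) < ‖u‖ * ‖v‖ := mul_pos ha hb
  constructor
  · rintro ⟨h1, h2⟩
    have h1' : 0 < 1 + lamhat * c := by nlinarith
    have h2' : 0 < lamhat + c := by nlinarith
    constructor
    · linarith
    · rw [lt_div_iff_of_neg hcneg]; nlinarith
  · rintro ⟨h1, h2⟩
    have h2' : lamhat * c > -1 := by
      rw [lt_div_iff_of_neg hcneg] at h2; nlinarith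
    exact ⟨by nlinarith, by nlinarith⟩
end
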